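/- Let (A,B) be a nonempty, bounded, closed and convex pair in a reflexive and strictly convex Banach space X, let S : A ∪ B → A ∪ B be a cyclic relatively nonexpansive mapping, and suppose (p,q) ∈ A₀ × B₀ satisfies S(Pp) = p, S(Pq) = q and ‖p−q‖ = dist(A,B) (i.e., (p,q) is a best proximity pair of the noncyclic mapping S∘P). Then ‖p − Sp‖ = dist(A,B) and ‖q − Sq‖ = dist(A,B), i.e., both p and q are best proximity points of S. -/
import Mathlib


open Set

/-- `setDist A B = inf {‖x - y‖ : x ∈ A, y ∈ B}`. -/
noncomputable def setDist {X : Type*} [NormedAddCommGroup X] (A B : Set X) : ℝ :=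
  sInf ((fun p : X × X => ‖p.1 - p.2‖) '' (A ×ˢ B))

/-- `A₀ = {x ∈ A : ‖x - y‖ = dist(A,B) for some y ∈ B}`. -/
noncomputable def proxA {X : Type*} [NormedAddCommGroup X] (A B : Set X) : Set X :=
  {x ∈ A | ∃ y ∈ B, ‖x - y‖ = setDist A B}

/-- `B₀ = {y ∈ B : ‖x - y‖ = dist(A,B) for some x ∈ A}`. -/
noncomputable def proxB {X : Type*} [NormedAddCommGroup X] (A B : Set X) : Set X :=
  {y ∈ B | ∃ x ∈ A, ‖x - y‖ = setDist A B}

/-- If `S` is cyclic relatively nonexpansive and `(p, q) ∈ A₀ × B₀` is a best proximity pair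
of the noncyclic mapping `S ∘ P` (here `u = P p ∈ B₀` and `v = P q ∈ A₀` denote the proximal
points of `p` and `q`), then `p` and `q` are best proximity points of `S`. -/
theorem best_proximity_points_of_noncyclic_bpp
    {X : Type*} [NormedAddCommGroup X] [NormedSpace ℝ X] [CompleteSpace X]
    [StrictConvexSpace ℝ X]
    (hrefl : Function.Surjective (NormedSpace.inclusionInDoubleDual ℝ X))
    (A B : Set X) (hA : A.Nonempty) (hB : B.Nonempty)
    (hAbd : Bornology.IsBounded A) (hBbd : Bornology.IsBounded B)
    (hAcl : IsClosed A) (hBcl : IsClosed B)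
    (hAconv : Convex ℝ A) (hBconv : Convex ℝ B)
    (S : X → X) (hSA : MapsTo S A B) (hSB : MapsTo S B A)
    (hS : ∀ x ∈ A, ∀ y ∈ B, ‖S x - S y‖ ≤ ‖x - y‖)
    (p q u v : X) (hp : p ∈ proxA A B) (hq : q ∈ proxB A B)
    (hu : u ∈ proxB A B) (hv : v ∈ proxA A B)
    (hpu : ‖p - u‖ = setDist A B) (hqv : ‖v - q‖ = setDist A B)
    (hSp : S u = p) (hSq : S v = q) (hpq : ‖p - q‖ = setDist A B) :
    ‖p - S p‖ = setDist A B ∧ ‖q - S q‖ = setDist A B := by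
  have hd : ∀ x ∈ A, ∀ y ∈ B, setDist A B ≤ ‖x - y‖ := by
    intro x hx y hy
    apply csInf_le
    · exact ⟨0, fun r ⟨pr, _, hr⟩ => hr ▸ norm_nonneg _⟩
    · exact ⟨(x, y), ⟨hx, hy⟩, rfl⟩
  have hpA : p ∈ A := hp.1
  have hqB : q ∈ B := hq.1
  have huB : u ∈ B := hu.1
  have hvA : v ∈ A := hv.1
  constructor
  · have h1 : ‖S p - S u‖ ≤ ‖p - u‖ := hS p hpA u huB
    rw [hSp, hpu] at h1
    have h2 : setDist A B ≤ ‖p - S p‖ := hd p hpA (S p) (hSA hpA)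
    rw [← norm_neg, neg_sub] at h1
    linarith
  · have h1 : ‖S v - S q‖ ≤ ‖v - q‖ := hS v hvA q hqB
    rw [hSq, hqv] at h1
    have h2 : setDist A B ≤ ‖S q - q‖ := hd (S q) (hSB hqB) q hqB
    rw [← norm_neg, neg_sub] at h2
    linarith
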